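/- Let D ⊆ ℂ be an open disc, let a : D → ℂ be smooth (as a function of the underlying real variables), let m ≥ 1, and define u : D×ℂ → ℝ by u(z₁,z₂) := 2 Re(a(z₁) z₂^{m+1}). If u is plurisubharmonic on D×ℂ (i.e., its complex Hessian (∂²u/∂w_j∂w̄_k)_{j,k=1,2} is positive semidefinite at every point), then ∂_{z̄₁}a ≡ 0 on D, i.e., a is holomorphic on D. -/

import Mathlib

open Complex Metric Set Filter Topology ContinuousLinearMap

noncomputable section

/-- One-variable Wirtinger derivative ∂/∂z̄. -/
def w1bar (f : ℂ → ℂ) (z : ℂ) : ℂ :=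
  (fderiv ℝ f z 1 + Complex.I * fderiv ℝ f z Complex.I) / 2

/-- Complex coordinate directions in ℂ². -/
def e2 : Fin 2 → ℂ → ℂ × ℂ := ![fun c => (c, 0), fun c => (0, c)]

/-- Wirtinger derivative ∂/∂w_j on ℂ². -/
def wd2 (j : Fin 2) (f : ℂ × ℂ → ℂ) (z : ℂ × ℂ) : ℂ :=
  (fderiv ℝ f z (e2 j 1) - Complex.I * fderiv ℝ f z (e2 j Complex.I)) / 2

/-- Wirtinger derivative ∂/∂w̄_j on ℂ². -/
def wd2bar (j : Fin 2) (f : ℂ × ℂ → ℂ) (z : ℂ × ℂ) : ℂ :=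
  (fderiv ℝ f z (e2 j 1) + Complex.I * fderiv ℝ f z (e2 j Complex.I)) / 2

/-- One-variable Wirtinger derivative ∂/∂z. -/
def w1d (f : ℂ → ℂ) (z : ℂ) : ℂ :=
  (fderiv ℝ f z 1 - Complex.I * fderiv ℝ f z Complex.I) / 2

lemma hasFDerivAt_cpow (n : ℕ) (z : ℂ) :
    HasFDerivAt (fun w : ℂ => w ^ n)
      ((((n : ℂ) * z ^ (n - 1)) • (1 : ℂ →L[ℂ] ℂ)).restrictScalars ℝ) z := by
  have := ((hasDerivAt_pow n z).hasFDerivAt).restrictScalars ℝ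
  refine this.congr_fderiv ?_
  ext
  simp [mul_comm]

lemma u_deriv_eval (a : ℂ → ℂ) (m : ℕ) (p : ℂ × ℂ) (ha1 : DifferentiableAt ℝ a p.1) (h : ℂ × ℂ) :
    fderiv ℝ (fun q : ℂ × ℂ => (2 * ((a q.1 * q.2 ^ (m + 1)).re : ℝ) : ℂ)) p h =
      (fderiv ℝ a p.1 h.1 * p.2 ^ (m + 1) + a p.1 * (((m : ℂ) + 1) * p.2 ^ m * h.2))
      + (starRingEnd ℂ) (fderiv ℝ a p.1 h.1 * p.2 ^ (m + 1)
          + a p.1 * (((m : ℂ) + 1) * p.2 ^ m * h.2)) := by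
  have hfun : (fun q : ℂ × ℂ => (2 * ((a q.1 * q.2 ^ (m + 1)).re : ℝ) : ℂ)) =
      fun q : ℂ × ℂ => (a q.1 * q.2 ^ (m + 1)) + (starRingEnd ℂ) (a q.1 * q.2 ^ (m + 1)) := by
    funext q
    rw [Complex.add_conj]
    push_cast
    ring
  have hA : HasFDerivAt (fun q : ℂ × ℂ => a q.1)
      ((fderiv ℝ a p.1).comp (fst ℝ ℂ ℂ)) p :=
    ha1.hasFDerivAt.comp p hasFDerivAt_fst
  have hP : HasFDerivAt (fun q : ℂ × ℂ => q.2 ^ (m + 1)) _ p :=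
    (hasFDerivAt_cpow (m + 1) p.2).comp p hasFDerivAt_snd
  have hF : HasFDerivAt (fun q : ℂ × ℂ => a q.1 * q.2 ^ (m + 1)) _ p := hA.mul hP
  have hC : HasFDerivAt (fun q : ℂ × ℂ => (starRingEnd ℂ) (a q.1 * q.2 ^ (m + 1))) _ p :=
    Complex.conjCLE.hasFDerivAt.comp p hF
  have hU : HasFDerivAt (fun q : ℂ × ℂ => a q.1 * q.2 ^ (m + 1) + (starRingEnd ℂ) (a q.1 * q.2 ^ (m + 1))) _ p := hF.add hC
  rw [hfun, hU.fderiv]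
  simp [ContinuousLinearMap.smul_apply, Complex.conjCLE_apply, map_add, map_mul]
  ring

lemma wd2bar0_eq (a : ℂ → ℂ) (m : ℕ) (p : ℂ × ℂ) (ha1 : DifferentiableAt ℝ a p.1) :
    wd2bar 0 (fun q : ℂ × ℂ => (2 * ((a q.1 * q.2 ^ (m + 1)).re : ℝ) : ℂ)) p =
      w1bar a p.1 * p.2 ^ (m + 1)
        + (starRingEnd ℂ) (w1d a p.1) * ((starRingEnd ℂ) p.2) ^ (m + 1) := by
  simp only [wd2bar, e2]
  rw [u_deriv_eval a m p ha1, u_deriv_eval a m p ha1]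
  simp only [Matrix.cons_val_zero, w1bar, w1d, map_add, map_mul, map_pow, map_sub, map_div₀,
    Complex.conj_I, map_one, map_ofNat, map_zero, mul_zero, zero_mul]
  ring_nf
  try simp [Complex.I_sq]
  try ring_nf

lemma wd2bar1_eq (a : ℂ → ℂ) (m : ℕ) (p : ℂ × ℂ) (ha1 : DifferentiableAt ℝ a p.1) :
    wd2bar 1 (fun q : ℂ × ℂ => (2 * ((a q.1 * q.2 ^ (m + 1)).re : ℝ) : ℂ)) p =
      ((m : ℂ) + 1) * ((starRingEnd ℂ) (a p.1) * ((starRingEnd ℂ) p.2) ^ m) := by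
  simp only [wd2bar, e2]
  rw [u_deriv_eval a m p ha1, u_deriv_eval a m p ha1]
  simp only [Matrix.cons_val_one, Matrix.head_cons, map_zero, zero_mul, map_add, map_mul,
    map_pow, Complex.conj_I, map_one, map_ofNat, map_natCast, mul_zero]
  ring_nf
  try simp [Complex.I_sq]
  try ring_nf
  linear_combination (((m : ℂ) + 1) / 2 * (p.2 ^ m * a p.1
    - (starRingEnd ℂ) p.2 ^ m * (starRingEnd ℂ) (a p.1))) * Complex.I_sq

lemma fderiv_B1_eval (a : ℂ → ℂ) (m : ℕ) (p : ℂ × ℂ) (hz : DifferentiableAt ℝ a p.1)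
    (h : ℂ × ℂ) :
    fderiv ℝ (fun q : ℂ × ℂ =>
        ((m : ℂ) + 1) * ((starRingEnd ℂ) (a q.1) * ((starRingEnd ℂ) q.2) ^ m)) p h =
      ((m : ℂ) + 1) * ((starRingEnd ℂ) (fderiv ℝ a p.1 h.1) * ((starRingEnd ℂ) p.2) ^ m
        + (starRingEnd ℂ) (a p.1) *
            ((m : ℂ) * ((starRingEnd ℂ) p.2) ^ (m - 1) * (starRingEnd ℂ) h.2)) := by
  have hca : HasFDerivAt (fun w : ℂ => (starRingEnd ℂ) (a w))
      ((Complex.conjCLE.toContinuousLinearMap).comp (fderiv ℝ a p.1)) p.1 :=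
    Complex.conjCLE.hasFDerivAt.comp p.1 hz.hasFDerivAt
  have h1 : HasFDerivAt (fun q : ℂ × ℂ => (starRingEnd ℂ) (a q.1)) _ p :=
    hca.comp p hasFDerivAt_fst
  have hconj2 : HasFDerivAt (fun q : ℂ × ℂ => (starRingEnd ℂ) q.2)
      ((Complex.conjCLE.toContinuousLinearMap).comp (snd ℝ ℂ ℂ)) p :=
    Complex.conjCLE.hasFDerivAt.comp p hasFDerivAt_snd
  have h2 : HasFDerivAt (fun q : ℂ × ℂ => ((starRingEnd ℂ) q.2) ^ m) _ p :=
    (hasFDerivAt_cpow m ((starRingEnd ℂ) p.2)).comp p hconj2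
  have hB1 : HasFDerivAt (fun q : ℂ × ℂ =>
      ((m : ℂ) + 1) * ((starRingEnd ℂ) (a q.1) * ((starRingEnd ℂ) q.2) ^ m)) _ p :=
    (h1.mul h2).const_mul ((m : ℂ) + 1)
  rw [hB1.fderiv]
  simp [Complex.conjCLE_apply]
  ring

lemma fderiv_B0_snd_eval (a : ℂ → ℂ) (m : ℕ) (p : ℂ × ℂ)
    (hw : DifferentiableAt ℝ (w1bar a) p.1) (hd : DifferentiableAt ℝ (w1d a) p.1)
    (h₂ : ℂ) :
    fderiv ℝ (fun q : ℂ × ℂ =>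
        w1bar a q.1 * q.2 ^ (m + 1)
          + (starRingEnd ℂ) (w1d a q.1) * ((starRingEnd ℂ) q.2) ^ (m + 1)) p (0, h₂) =
      w1bar a p.1 * (((m : ℂ) + 1) * p.2 ^ m * h₂)
        + (starRingEnd ℂ) (w1d a p.1) *
            (((m : ℂ) + 1) * ((starRingEnd ℂ) p.2) ^ m * (starRingEnd ℂ) h₂) := by
  have hconj2 : HasFDerivAt (fun q : ℂ × ℂ => (starRingEnd ℂ) q.2)
      ((Complex.conjCLE.toContinuousLinearMap).comp (snd ℝ ℂ ℂ)) p :=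
    Complex.conjCLE.hasFDerivAt.comp p hasFDerivAt_snd
  have g1a : HasFDerivAt (fun q : ℂ × ℂ => w1bar a q.1) _ p :=
    hw.hasFDerivAt.comp p hasFDerivAt_fst
  have g1b : HasFDerivAt (fun q : ℂ × ℂ => q.2 ^ (m + 1)) _ p :=
    (hasFDerivAt_cpow (m + 1) p.2).comp p hasFDerivAt_snd
  have g2a : HasFDerivAt (fun q : ℂ × ℂ => (starRingEnd ℂ) (w1d a q.1)) _ p :=
    (Complex.conjCLE.hasFDerivAt.comp p.1 hd.hasFDerivAt).comp p hasFDerivAt_fst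
  have g2b : HasFDerivAt (fun q : ℂ × ℂ => ((starRingEnd ℂ) q.2) ^ (m + 1)) _ p :=
    (hasFDerivAt_cpow (m + 1) ((starRingEnd ℂ) p.2)).comp (g := fun w : ℂ => w ^ (m + 1)) p hconj2
  have hB0 : HasFDerivAt (fun q : ℂ × ℂ =>
      w1bar a q.1 * q.2 ^ (m + 1)
        + (starRingEnd ℂ) (w1d a q.1) * ((starRingEnd ℂ) q.2) ^ (m + 1)) _ p :=
    (g1a.mul g1b).add (g2a.mul g2b)
  rw [hB0.fderiv]
  simp [Complex.conjCLE_apply]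
  try ring

lemma diff_w1bar_w1d (a : ℂ → ℂ) {s : Set ℂ} (hs : IsOpen s)
    (ha : ContDiffOn ℝ (⊤ : ℕ∞) a s) {z : ℂ} (hz : z ∈ s) :
    DifferentiableAt ℝ (w1bar a) z ∧ DifferentiableAt ℝ (w1d a) z := by
  have hC : ContDiffAt ℝ (⊤ : ℕ∞) a z := ha.contDiffAt (hs.mem_nhds hz)
  have hfd : ContDiffAt ℝ 1 (fderiv ℝ a) z := hC.fderiv_right (by
    rw [show ((1 : WithTop ℕ∞) + 1) = ((1 + 1 : ℕ) : WithTop ℕ∞) by norm_cast,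
      ← WithTop.coe_natCast]
    exact WithTop.coe_le_coe.mpr le_top)
  have hΦ : DifferentiableAt ℝ (fderiv ℝ a) z := hfd.differentiableAt one_ne_zero
  have h1 : DifferentiableAt ℝ (fun w => fderiv ℝ a w 1) z :=
    hΦ.clm_apply (differentiableAt_const _)
  have hI : DifferentiableAt ℝ (fun w => fderiv ℝ a w Complex.I) z :=
    hΦ.clm_apply (differentiableAt_const _)
  unfold w1bar w1d
  simp only [div_eq_mul_inv]
  constructor
  · exact (h1.add (hI.const_mul Complex.I)).mul_const _
  · exact (h1.sub (hI.const_mul Complex.I)).mul_const _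

lemma diff_on_open (a : ℂ → ℂ) {s : Set ℂ} (hs : IsOpen s)
    (ha : ContDiffOn ℝ (⊤ : ℕ∞) a s) {z : ℂ} (hz : z ∈ s) :
    DifferentiableAt ℝ a z := by
  refine (ha.contDiffAt (hs.mem_nhds hz)).differentiableAt ?_
  simp

/-- if u(z₁,z₂) = 2 Re(a(z₁) z₂^{m+1}) is plurisubharmonic on
D × ℂ (D an open disc, a smooth), then a is holomorphic on D. -/
theorem statement_5 (c : ℂ) (r : ℝ) (hr : 0 < r) (a : ℂ → ℂ)
    (ha : ContDiffOn ℝ (⊤ : ℕ∞) a (Metric.ball c r)) (m : ℕ) (hm : 1 ≤ m)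
    (hpsh : ∀ p : ℂ × ℂ, p.1 ∈ Metric.ball c r → ∀ v : Fin 2 → ℂ,
      0 ≤ (∑ j, ∑ k,
        wd2 j (wd2bar k (fun q : ℂ × ℂ => (2 * ((a q.1 * q.2 ^ (m + 1)).re : ℝ) : ℂ)))
          p * v j * (starRingEnd ℂ) (v k)).re) :
    ∀ z ∈ Metric.ball c r, w1bar a z = 0 := by
  intro z hz
  have hza : DifferentiableAt ℝ a z := diff_on_open a isOpen_ball ha hz
  obtain ⟨hw, hd⟩ := diff_w1bar_w1d a isOpen_ball ha hz
  set p : ℂ × ℂ := (z, 1) with hp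
  have hmem : (Metric.ball c r ×ˢ (univ : Set ℂ)) ∈ 𝓝 p :=
    (isOpen_ball.prod isOpen_univ).mem_nhds ⟨hz, mem_univ _⟩
  -- eventual equalities
  have hev1 : wd2bar 1 (fun q : ℂ × ℂ => (2 * ((a q.1 * q.2 ^ (m + 1)).re : ℝ) : ℂ)) =ᶠ[𝓝 p]
      fun q : ℂ × ℂ =>
        ((m : ℂ) + 1) * ((starRingEnd ℂ) (a q.1) * ((starRingEnd ℂ) q.2) ^ m) := by
    filter_upwards [hmem] with q hq
    exact wd2bar1_eq a m q (diff_on_open a isOpen_ball ha hq.1)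
  have hev0 : wd2bar 0 (fun q : ℂ × ℂ => (2 * ((a q.1 * q.2 ^ (m + 1)).re : ℝ) : ℂ)) =ᶠ[𝓝 p]
      fun q : ℂ × ℂ =>
        w1bar a q.1 * q.2 ^ (m + 1)
          + (starRingEnd ℂ) (w1d a q.1) * ((starRingEnd ℂ) q.2) ^ (m + 1) := by
    filter_upwards [hmem] with q hq
    exact wd2bar0_eq a m q (diff_on_open a isOpen_ball ha hq.1)
  -- Hessian entries at p = (z,1)
  have H01 : wd2 0 (wd2bar 1
      (fun q : ℂ × ℂ => (2 * ((a q.1 * q.2 ^ (m + 1)).re : ℝ) : ℂ))) p =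
      ((m : ℂ) + 1) * (starRingEnd ℂ) (w1bar a z) := by
    simp only [wd2, hev1.fderiv_eq, e2, Matrix.cons_val_zero]
    rw [fderiv_B1_eval a m p hza, fderiv_B1_eval a m p hza]
    simp only [hp, map_one, one_pow, map_zero, mul_zero, zero_mul, add_zero, mul_one, w1bar,
      map_div₀, map_add, map_mul, Complex.conj_I, map_ofNat]
    ring_nf
    try simp [Complex.I_sq]
    try ring_nf
  have H11 : wd2 1 (wd2bar 1
      (fun q : ℂ × ℂ => (2 * ((a q.1 * q.2 ^ (m + 1)).re : ℝ) : ℂ))) p = 0 := by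
    simp only [wd2, hev1.fderiv_eq, e2, Matrix.cons_val_one, Matrix.head_cons]
    rw [fderiv_B1_eval a m p hza, fderiv_B1_eval a m p hza]
    simp only [hp, map_one, one_pow, map_zero, mul_zero, zero_mul, add_zero, zero_add, mul_one,
      Complex.conj_I]
    ring_nf
    try simp [Complex.I_sq]
    try ring_nf
    linear_combination (((m : ℂ) + (m : ℂ) ^ 2) / 2 * (starRingEnd ℂ) (a z)) * Complex.I_sq
  have H10 : wd2 1 (wd2bar 0
      (fun q : ℂ × ℂ => (2 * ((a q.1 * q.2 ^ (m + 1)).re : ℝ) : ℂ))) p =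
      ((m : ℂ) + 1) * w1bar a z := by
    simp only [wd2, hev0.fderiv_eq, e2, Matrix.cons_val_one, Matrix.head_cons]
    simp only [Matrix.cons_val_zero]
    rw [fderiv_B0_snd_eval a m p hw hd 1, fderiv_B0_snd_eval a m p hw hd Complex.I]
    simp only [hp, map_one, one_pow, mul_one, Complex.conj_I]
    ring_nf
    try simp [Complex.I_sq]
    try ring_nf
  -- the key real inequality
  set α := w1bar a z with hα
  set W := wd2 0 (wd2bar 0
      (fun q : ℂ × ℂ => (2 * ((a q.1 * q.2 ^ (m + 1)).re : ℝ) : ℂ))) p with hW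
  have key : ∀ t : ℝ, 0 ≤ t ^ 2 * W.re - 2 * ((m : ℝ) + 1) * t * normSq α := by
    intro t
    have h0 := hpsh p hz ![(t : ℂ), -(starRingEnd ℂ) α]
    simp only [Fin.sum_univ_two, Matrix.cons_val_zero, Matrix.cons_val_one, Matrix.head_cons]
      at h0
    rw [H01, H10, H11, ← hW] at h0
    have hid : W * (t : ℂ) * (starRingEnd ℂ) (t : ℂ)
        + ((m : ℂ) + 1) * (starRingEnd ℂ) α * (t : ℂ)
            * (starRingEnd ℂ) (-(starRingEnd ℂ) α)
        + (((m : ℂ) + 1) * α * (-(starRingEnd ℂ) α) * (starRingEnd ℂ) (t : ℂ)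
        + 0 * (-(starRingEnd ℂ) α) * (starRingEnd ℂ) (-(starRingEnd ℂ) α)) =
        ((t : ℝ) ^ 2 : ℝ) * W - ((2 * ((m : ℝ) + 1) * t * normSq α : ℝ) : ℂ) := by
      have hαα : α * (starRingEnd ℂ) α = (normSq α : ℂ) := Complex.mul_conj α
      simp only [map_neg, Complex.conj_conj, Complex.conj_ofReal]
      push_cast
      linear_combination (-2 * ((m : ℂ) + 1) * (t : ℂ)) * hαα
    rw [hid] at h0
    simpa [Complex.sub_re, Complex.mul_re, ← Complex.ofReal_pow, Complex.ofReal_re,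
      Complex.ofReal_im] using h0
  -- conclude
  by_contra hne
  have hN : 0 < normSq α := Complex.normSq_pos.mpr hne
  set H := W.re with hH
  set N := 2 * ((m : ℝ) + 1) * normSq α with hNdef
  have hNpos : 0 < N := by positivity
  set t₀ := N / (|H| + 1) with ht₀def
  have habs : (0 : ℝ) < |H| + 1 := by positivity
  have ht₀ : 0 < t₀ := by positivity
  have hk := key t₀
  have hHle : H ≤ |H| := le_abs_self H
  have ht₀eq : t₀ * (|H| + 1) = N := by
    rw [ht₀def]
    field_simp
  nlinarith [mul_le_mul_of_nonneg_left hHle ht₀.le, mul_pos ht₀ ht₀,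
    mul_le_mul_of_nonneg_left (mul_le_mul_of_nonneg_left hHle ht₀.le) ht₀.le]

end
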